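/- Let f : ℝⁿ → ℝ be convex and C³ with Lipschitz-type bound on the third derivative variation: ‖∇³f(x) − ∇³f(y)‖ ≤ L‖x−y‖^ν for all x, y, with ν ∈ [0,1]. Then for all x, h, u ∈ ℝⁿ: |∇³f(x)[h,h,u]| ≤ 2·(L/(1+ν))^{1/(1+ν)}·⟨∇²f(x)h,h⟩^{ν/(1+ν)}·‖h‖^{2/(1+ν)}·‖u‖. -/

import Mathlib

open scoped RealInnerProductSpace


variable {E : Type*} [NormedAddCommGroup E] [NormedSpace ℝ E]

lemma sderiv_eq (f : E → ℝ) (hf : ContDiff ℝ 3 f) (y b c : E) :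
    iteratedFDeriv ℝ 2 f y ![b, c] = fderiv ℝ (fun z => fderiv ℝ f z c) y b := by
  have hd : DifferentiableAt ℝ (fderiv ℝ f) y :=
    ((hf.fderiv_right (m := 2) (by norm_num)).differentiable (by norm_num)) y
  rw [iteratedFDeriv_two_apply, fderiv_clm_apply hd (differentiableAt_const c)]
  simp

lemma third_eq (f : E → ℝ) (hf : ContDiff ℝ 3 f) (x a b c : E) :
    iteratedFDeriv ℝ 3 f x ![a, b, c]
      = fderiv ℝ (fun y => iteratedFDeriv ℝ 2 f y ![b, c]) x a := by
  have hd : DifferentiableAt ℝ (iteratedFDeriv ℝ 2 f) x :=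
    (hf.differentiable_iteratedFDeriv (by norm_num)) x
  rw [fderiv_continuousMultilinear_apply_const_apply hd]
  rfl

lemma swap23 (f : E → ℝ) (hf : ContDiff ℝ 3 f) (x a b c : E) :
    iteratedFDeriv ℝ 3 f x ![a, b, c] = iteratedFDeriv ℝ 3 f x ![a, c, b] := by
  rw [third_eq f hf, third_eq f hf]
  have he : (fun y => iteratedFDeriv ℝ 2 f y ![b, c])
      = fun y => iteratedFDeriv ℝ 2 f y ![c, b] := by
    funext y
    rw [iteratedFDeriv_two_apply, iteratedFDeriv_two_apply]
    simp only [Matrix.cons_val_zero, Matrix.cons_val_one, Matrix.head_cons]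
    exact (hf.contDiffAt.isSymmSndFDerivAt (by norm_num)) b c
  rw [he]

lemma swap12 (f : E → ℝ) (hf : ContDiff ℝ 3 f) (x a b c : E) :
    iteratedFDeriv ℝ 3 f x ![a, b, c] = iteratedFDeriv ℝ 3 f x ![b, a, c] := by
  have hφ : ContDiff ℝ 2 (fun z => fderiv ℝ f z c) := by
    have h1 : ContDiff ℝ 2 (fderiv ℝ f) := hf.fderiv_right (by norm_num)
    exact (ContinuousLinearMap.apply ℝ ℝ c).contDiff.comp h1
  have key : ∀ v w : E, iteratedFDeriv ℝ 3 f x ![v, w, c]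
      = fderiv ℝ (fderiv ℝ (fun z => fderiv ℝ f z c)) x v w := by
    intro v w
    rw [third_eq f hf]
    have he : (fun y => iteratedFDeriv ℝ 2 f y ![w, c])
        = fun y => fderiv ℝ (fun z => fderiv ℝ f z c) y w :=
      funext fun y => sderiv_eq f hf y w c
    rw [he]
    have hd : DifferentiableAt ℝ (fderiv ℝ (fun z => fderiv ℝ f z c)) x :=
      ((hφ.fderiv_right (m := 1) (by norm_num)).differentiable (by norm_num)) x
    rw [fderiv_clm_apply hd (differentiableAt_const w)]
    simp
  rw [key a b, key b a]
  exact (hφ.contDiffAt.isSymmSndFDerivAt (by norm_num)) a b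

lemma nonneg_of_monotone_hasDerivAt {p : ℝ → ℝ} (hp : Monotone p) {d t : ℝ}
    (hd : HasDerivAt p d t) : 0 ≤ d := by
  have h1 : Filter.Tendsto (slope p t) (nhdsWithin t (Set.Ioi t)) (nhds d) :=
    (hasDerivAt_iff_tendsto_slope.mp hd).mono_left
      (nhdsWithin_mono t fun s hs => Set.mem_compl_singleton_iff.mpr (ne_of_gt hs))
  refine ge_of_tendsto h1 ?_
  refine Filter.eventually_of_mem self_mem_nhdsWithin fun s hs => ?_
  rw [slope_def_field]
  have hts : t < s := hs
  exact div_nonneg (by simp [sub_nonneg, hp hts.le]) (by linarith)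

lemma second_nonneg (f : E → ℝ) (hf : ContDiff ℝ 3 f)
    (hconv : ConvexOn ℝ Set.univ f) (y h : E) :
    0 ≤ iteratedFDeriv ℝ 2 f y ![h, h] := by
  have hf1 : Differentiable ℝ f := hf.differentiable (by norm_num)
  have hf2 : Differentiable ℝ (fderiv ℝ f) :=
    (hf.fderiv_right (m := 2) (by norm_num)).differentiable (by norm_num)
  set γ : ℝ → E := fun s => y + s • h with hγ
  have hγd : ∀ s : ℝ, HasDerivAt γ h s := fun s => by
    simpa [hγ] using ((hasDerivAt_id s).smul_const h).const_add y
  have hq : ConvexOn ℝ Set.univ (fun s : ℝ => f (γ s)) := by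
    have h2 := hconv.comp_affineMap (AffineMap.lineMap y (y + h) : ℝ →ᵃ[ℝ] E)
    simp only [Set.preimage_univ, Function.comp_def] at h2
    have he : (fun s : ℝ => f (γ s)) = fun x => f ((AffineMap.lineMap y (y + h)) x) := by
      funext s
      simp [hγ, AffineMap.lineMap_apply, add_sub_cancel_left, add_comm]
    rw [he]; exact h2
  set p : ℝ → ℝ := fun s => fderiv ℝ f (γ s) h with hp
  have hqd : ∀ s, HasDerivAt (fun s => f (γ s)) (p s) s := fun s =>
    (hf1 (γ s)).hasFDerivAt.comp_hasDerivAt s (hγd s)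
  have hmono : Monotone p := by
    have hdq : ∀ s ∈ Set.univ, DifferentiableAt ℝ (fun s => f (γ s)) s :=
      fun s _ => (hqd s).differentiableAt
    have hm := hq.monotoneOn_deriv hdq
    rw [monotoneOn_univ] at hm
    have he : deriv (fun s => f (γ s)) = p := funext fun s => (hqd s).deriv
    rwa [he] at hm
  have hy0 : γ 0 = y := by simp [hγ]
  have hpd : HasDerivAt p (fderiv ℝ (fun z => fderiv ℝ f z h) (γ 0) h) 0 :=
    ((hf2 (γ 0)).clm_apply (differentiableAt_const h)).hasFDerivAt.comp_hasDerivAt 0 (hγd 0)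
  rw [hy0] at hpd
  have := nonneg_of_monotone_hasDerivAt hmono hpd
  rwa [sderiv_eq f hf y h h]

lemma taylor_holder {g g' : ℝ → ℝ} {M ν : ℝ} (hν : 0 ≤ ν) (hM : 0 ≤ M)
    (hderiv : ∀ t, HasDerivAt g (g' t) t) (hcont : Continuous g')
    (hH : ∀ t, |g' t - g' 0| ≤ M * |t| ^ ν) {s : ℝ} (hs : 0 ≤ s) :
    |g s - g 0 - s * g' 0| ≤ M * s ^ (1 + ν) / (1 + ν) := by
  have h1ν : (0:ℝ) < 1 + ν := by linarith
  have hcrp : Continuous fun t : ℝ => t ^ ν :=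
    continuous_iff_continuousAt.mpr fun t => Real.continuousAt_rpow_const t ν (Or.inr hν)
  have hint : (∫ t in (0:ℝ)..s, g' t) = g s - g 0 :=
    intervalIntegral.integral_eq_sub_of_hasDerivAt (fun t _ => hderiv t)
      (hcont.intervalIntegrable 0 s)
  have hrepr : g s - g 0 - s * g' 0 = ∫ t in (0:ℝ)..s, (g' t - g' 0) := by
    rw [intervalIntegral.integral_sub (hcont.intervalIntegrable 0 s)
      intervalIntegrable_const, hint, intervalIntegral.integral_const, smul_eq_mul]
    ring
  have hint2 : IntervalIntegrable (fun t : ℝ => M * t ^ ν) MeasureTheory.volume 0 s :=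
    (continuous_const.mul hcrp).intervalIntegrable 0 s
  have hstep : |∫ t in (0:ℝ)..s, (g' t - g' 0)| ≤ ∫ t in (0:ℝ)..s, M * t ^ ν := by
    refine (intervalIntegral.abs_integral_le_integral_abs hs).trans ?_
    refine intervalIntegral.integral_mono_on hs ?_ hint2 ?_
    · exact ((hcont.sub continuous_const).abs).intervalIntegrable 0 s
    · intro t ht
      have := hH t
      rwa [abs_of_nonneg ht.1] at this
  have hval : (∫ t in (0:ℝ)..s, M * t ^ ν) = M * s ^ (1 + ν) / (1 + ν) := by
    rw [intervalIntegral.integral_const_mul,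
      integral_rpow (Or.inl (by linarith : (-1:ℝ) < ν))]
    rw [Real.zero_rpow (by linarith : ν + 1 ≠ 0)]
    rw [add_comm ν 1]
    ring
  rw [hrepr]
  calc |∫ t in (0:ℝ)..s, (g' t - g' 0)| ≤ ∫ t in (0:ℝ)..s, M * t ^ ν := hstep
    _ = M * s ^ (1 + ν) / (1 + ν) := hval

lemma opt_bound {a c M ν : ℝ} (hν : 0 ≤ ν) (hM : 0 < M) (hc : 0 ≤ c)
    (key : ∀ s : ℝ, 0 ≤ s → a * s ≤ c + M * s ^ (1 + ν) / (1 + ν)) :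
    a ≤ 2 * (M / (1 + ν)) ^ (1 / (1 + ν)) * c ^ (ν / (1 + ν)) := by
  have h1ν : (0:ℝ) < 1 + ν := by linarith
  rcases eq_or_lt_of_le hc with hc0 | hcpos
  · rcases eq_or_lt_of_le hν with hν0 | hνpos
    · -- ν = 0
      have hk := key 1 zero_le_one
      rw [← hν0] at hk ⊢
      simp only [Real.one_rpow, add_zero, zero_div, Real.rpow_zero, mul_one, ← hc0] at hk ⊢
      norm_num at hk ⊢
      linarith
    · -- ν > 0, c = 0 : show a ≤ 0 and RHS = 0
      have ha : ∀ s : ℝ, 0 < s → a ≤ M * s ^ ν / (1 + ν) := by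
        intro s hs
        have hk := key s hs.le
        rw [← hc0, zero_add] at hk
        have hpow : s ^ (1 + ν) = s * s ^ ν := by
          rw [Real.rpow_add hs, Real.rpow_one]
        rw [hpow] at hk
        have h2 : a * s ≤ M * s ^ ν / (1 + ν) * s := by
          have : M * s ^ ν / (1 + ν) * s = M * (s * s ^ ν) / (1 + ν) := by ring
          rw [this]
          linarith [hk]
        exact le_of_mul_le_mul_right h2 hs
      have hlim : Filter.Tendsto (fun s : ℝ => M * s ^ ν / (1 + ν))
          (nhdsWithin 0 (Set.Ioi 0)) (nhds 0) := by
        have h0 : Filter.Tendsto (fun s : ℝ => s ^ ν) (nhds 0) (nhds 0) := by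
          have := (Real.continuousAt_rpow_const 0 ν (Or.inr hν)).tendsto
          rwa [Real.zero_rpow (ne_of_gt hνpos)] at this
        have h1 := (h0.const_mul M).div_const (1 + ν)
        simp only [mul_zero, zero_div] at h1
        exact h1.mono_left nhdsWithin_le_nhds
      have hA : a ≤ 0 := by
        refine ge_of_tendsto hlim ?_
        exact Filter.eventually_of_mem self_mem_nhdsWithin fun s hs => ha s hs
      have hrhs : (2:ℝ) * (M / (1 + ν)) ^ (1 / (1 + ν)) * c ^ (ν / (1 + ν)) = 0 := by
        rw [← hc0, Real.zero_rpow (ne_of_gt (div_pos hνpos h1ν)), mul_zero]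
      linarith [hA, hrhs.ge]
  · -- c > 0
    set s := ((1 + ν) * c / M) ^ (1 / (1 + ν)) with hs_def
    have hbase : 0 < (1 + ν) * c / M := by positivity
    have hspos : 0 < s := Real.rpow_pos_of_pos hbase _
    have hsp : s ^ (1 + ν) = (1 + ν) * c / M := by
      rw [hs_def, ← Real.rpow_mul hbase.le, one_div_mul_cancel (ne_of_gt h1ν),
        Real.rpow_one]
    have hkey := key s hspos.le
    rw [hsp] at hkey
    have hcc : M * ((1 + ν) * c / M) / (1 + ν) = c := by
      field_simp
    rw [hcc] at hkey
    have ha : a ≤ 2 * c / s := by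
      rw [le_div_iff₀ hspos]
      linarith
    have e1 : s * (M / (1 + ν)) ^ (1 / (1 + ν)) = c ^ (1 / (1 + ν)) := by
      rw [hs_def, ← Real.mul_rpow hbase.le (by positivity)]
      congr 1
      field_simp
    have e2 : c ^ (1 / (1 + ν)) * c ^ (ν / (1 + ν)) = c := by
      rw [← Real.rpow_add hcpos, ← add_div, div_self (ne_of_gt h1ν), Real.rpow_one]
    have hfin : 2 * (M / (1 + ν)) ^ (1 / (1 + ν)) * c ^ (ν / (1 + ν)) * s = 2 * c := by
      calc 2 * (M / (1 + ν)) ^ (1 / (1 + ν)) * c ^ (ν / (1 + ν)) * s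
          = 2 * (s * (M / (1 + ν)) ^ (1 / (1 + ν))) * c ^ (ν / (1 + ν)) := by ring
        _ = 2 * c ^ (1 / (1 + ν)) * c ^ (ν / (1 + ν)) := by rw [e1]
        _ = 2 * c := by rw [mul_assoc, e2]
    refine ha.trans ?_
    rw [div_le_iff₀ hspos, hfin]


theorem holder_third_derivative_bound {n : ℕ}
    (f : EuclideanSpace ℝ (Fin n) → ℝ) (hf : ContDiff ℝ 3 f)
    (hconv : ConvexOn ℝ Set.univ f)
    (L ν : ℝ) (hL : 0 < L) (hν0 : 0 ≤ ν) (hν1 : ν ≤ 1)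
    (hHolder : ∀ x y : EuclideanSpace ℝ (Fin n),
      ‖iteratedFDeriv ℝ 3 f x - iteratedFDeriv ℝ 3 f y‖ ≤ L * ‖x - y‖ ^ ν) :
    ∀ x h u : EuclideanSpace ℝ (Fin n),
      |iteratedFDeriv ℝ 3 f x ![h, h, u]|
        ≤ 2 * (L / (1 + ν)) ^ (1 / (1 + ν)) *
            (iteratedFDeriv ℝ 2 f x ![h, h]) ^ (ν / (1 + ν)) *
            ‖h‖ ^ (2 / (1 + ν)) * ‖u‖ := by
  intro x h u
  have h1ν : (0:ℝ) < 1 + ν := by linarith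
  have hc : 0 ≤ iteratedFDeriv ℝ 2 f x ![h, h] := second_nonneg f hf hconv x h
  have hRHS : 0 ≤ 2 * (L / (1 + ν)) ^ (1 / (1 + ν)) *
      (iteratedFDeriv ℝ 2 f x ![h, h]) ^ (ν / (1 + ν)) *
      ‖h‖ ^ (2 / (1 + ν)) * ‖u‖ := by
    have h1 : (0:ℝ) ≤ (L / (1 + ν)) ^ (1 / (1 + ν)) := Real.rpow_nonneg (by positivity) _
    have h2 := Real.rpow_nonneg hc (ν / (1 + ν))
    have h3 := Real.rpow_nonneg (norm_nonneg h) (2 / (1 + ν))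
    have h4 := norm_nonneg u
    have h5 : (0:ℝ) ≤ 2 * (L / (1 + ν)) ^ (1 / (1 + ν)) := by linarith
    exact mul_nonneg (mul_nonneg (mul_nonneg h5 h2) h3) h4
  by_cases hh : h = 0
  · subst hh
    have hz : iteratedFDeriv ℝ 3 f x ![(0 : EuclideanSpace ℝ (Fin n)), 0, u] = 0 :=
      (iteratedFDeriv ℝ 3 f x).map_coord_zero (0 : Fin 3) (by simp)
    rw [hz, abs_zero]
    exact hRHS
  by_cases hu : u = 0
  · subst hu
    have hz : iteratedFDeriv ℝ 3 f x ![h, h, (0 : EuclideanSpace ℝ (Fin n))] = 0 :=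
      (iteratedFDeriv ℝ 3 f x).map_coord_zero (2 : Fin 3) (by simp)
    rw [hz, abs_zero]
    exact hRHS
  have hu' : (0:ℝ) < ‖u‖ := norm_pos_iff.mpr hu
  have hh' : (0:ℝ) < ‖h‖ := norm_pos_iff.mpr hh
  have key : ∀ v : EuclideanSpace ℝ (Fin n), v ≠ 0 →
      -(iteratedFDeriv ℝ 3 f x ![v, h, h]) ≤ 2 * (L / (1 + ν)) ^ (1 / (1 + ν)) *
        (iteratedFDeriv ℝ 2 f x ![h, h]) ^ (ν / (1 + ν)) * ‖h‖ ^ (2 / (1 + ν)) * ‖v‖ := by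
    intro v hv
    have hv' : (0:ℝ) < ‖v‖ := norm_pos_iff.mpr hv
    set γ : ℝ → EuclideanSpace ℝ (Fin n) := fun t => x + t • v with hγdef
    have hγd : ∀ t : ℝ, HasDerivAt γ v t := fun t => by
      simpa [hγdef] using ((hasDerivAt_id t).smul_const v).const_add x
    have hγ0 : γ 0 = x := by simp [hγdef]
    have hγc : Continuous γ := by
      exact continuous_const.add (continuous_id.smul continuous_const)
    set g : ℝ → ℝ := fun t => iteratedFDeriv ℝ 2 f (γ t) ![h, h] with hgdef
    set g' : ℝ → ℝ := fun t => iteratedFDeriv ℝ 3 f (γ t) ![v, h, h] with hg'def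
    have hdc : Differentiable ℝ (fun y => iteratedFDeriv ℝ 2 f y ![h, h]) :=
      (hf.differentiable_iteratedFDeriv (by norm_num)).continuousMultilinear_apply_const _
    have hderiv : ∀ t, HasDerivAt g (g' t) t := by
      intro t
      have h1 : HasDerivAt (fun t => (fun y => iteratedFDeriv ℝ 2 f y ![h, h]) (γ t))
          (fderiv ℝ (fun y => iteratedFDeriv ℝ 2 f y ![h, h]) (γ t) v) t :=
        (hdc (γ t)).hasFDerivAt.comp_hasDerivAt t (hγd t)
      have h2 : g' t = fderiv ℝ (fun y => iteratedFDeriv ℝ 2 f y ![h, h]) (γ t) v :=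
        third_eq f hf (γ t) v h h
      rw [hgdef]
      exact h2 ▸ h1
    have hcg' : Continuous g' := by
      have h1 : Continuous fun t => iteratedFDeriv ℝ 3 f (γ t) :=
        (hf.continuous_iteratedFDeriv (le_refl _)).comp hγc
      exact ((ContinuousMultilinearMap.apply ℝ
        (fun _ : Fin 3 => EuclideanSpace ℝ (Fin n)) ℝ ![v, h, h]).continuous).comp h1
    set M : ℝ := L * ‖v‖ ^ ν * (‖v‖ * (‖h‖ * ‖h‖)) with hMdef
    have hM : 0 < M :=
      mul_pos (mul_pos hL (Real.rpow_pos_of_pos hv' ν)) (mul_pos hv' (mul_pos hh' hh'))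
    have hH : ∀ t, |g' t - g' 0| ≤ M * |t| ^ ν := by
      intro t
      have e0 : g' t - g' 0
          = (iteratedFDeriv ℝ 3 f (γ t) - iteratedFDeriv ℝ 3 f (γ 0)) ![v, h, h] := by
        rw [ContinuousMultilinearMap.sub_apply]
      have e1 : |g' t - g' 0| ≤ ‖iteratedFDeriv ℝ 3 f (γ t) - iteratedFDeriv ℝ 3 f (γ 0)‖ *
          (‖v‖ * (‖h‖ * ‖h‖)) := by
        rw [e0, ← Real.norm_eq_abs]
        have hle := (iteratedFDeriv ℝ 3 f (γ t) - iteratedFDeriv ℝ 3 f (γ 0)).le_opNorm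
          ![v, h, h]
        have hprod : (∏ i, ‖(![v, h, h] : Fin 3 → EuclideanSpace ℝ (Fin n)) i‖)
            = ‖v‖ * (‖h‖ * ‖h‖) := by
          rw [Fin.prod_univ_three]
          simp [mul_assoc]
        rwa [hprod] at hle
      have e2 : ‖iteratedFDeriv ℝ 3 f (γ t) - iteratedFDeriv ℝ 3 f (γ 0)‖
          ≤ L * (|t| ^ ν * ‖v‖ ^ ν) := by
        have hho := hHolder (γ t) (γ 0)
        have hdiff : γ t - γ 0 = t • v := by simp [hγdef]
        rw [hdiff, norm_smul, Real.norm_eq_abs,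
          Real.mul_rpow (abs_nonneg t) (norm_nonneg v)] at hho
        exact hho
      calc |g' t - g' 0| ≤ ‖iteratedFDeriv ℝ 3 f (γ t) - iteratedFDeriv ℝ 3 f (γ 0)‖ *
            (‖v‖ * (‖h‖ * ‖h‖)) := e1
        _ ≤ (L * (|t| ^ ν * ‖v‖ ^ ν)) * (‖v‖ * (‖h‖ * ‖h‖)) :=
            mul_le_mul_of_nonneg_right e2 (by positivity)
        _ = M * |t| ^ ν := by rw [hMdef]; ring
    have keyineq : ∀ s : ℝ, 0 ≤ s → (-(g' 0)) * s
        ≤ iteratedFDeriv ℝ 2 f x ![h, h] + M * s ^ (1 + ν) / (1 + ν) := by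
      intro s hs
      have ht := taylor_holder hν0 hM.le hderiv hcg' hH hs
      have hg0 : g 0 = iteratedFDeriv ℝ 2 f x ![h, h] := by
        rw [hgdef]
        simp only [hγ0]
      have hgs : 0 ≤ g s := second_nonneg f hf hconv (γ s) h
      have habs := (abs_le.mp ht).2
      have hr : (-(g' 0)) * s = -(s * g' 0) := by ring
      rw [hr, ← hg0]
      linarith
    have hopt := opt_bound hν0 hM hc keyineq
    have hg'0 : g' 0 = iteratedFDeriv ℝ 3 f x ![v, h, h] := by
      rw [hg'def]
      simp only [hγ0]
    rw [hg'0] at hopt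
    refine hopt.trans_eq ?_
    have hMsplit : (M / (1 + ν)) ^ (1 / (1 + ν))
        = (L / (1 + ν)) ^ (1 / (1 + ν)) * (‖h‖ ^ ((2:ℝ) / (1 + ν)) * ‖v‖) := by
      have hm2 : M / (1 + ν) = (L / (1 + ν)) * (‖v‖ ^ (ν + 1) * ‖h‖ ^ (2:ℝ)) := by
        rw [hMdef, Real.rpow_add_one (ne_of_gt hv'),
          show (2:ℝ) = ((2:ℕ):ℝ) by norm_num, Real.rpow_natCast]
        ring
      rw [hm2, Real.mul_rpow (by positivity) (by positivity),
        Real.mul_rpow (by positivity) (by positivity),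
        ← Real.rpow_mul (norm_nonneg v), ← Real.rpow_mul (norm_nonneg h),
        show (ν + 1) * (1 / (1 + ν)) = 1 by rw [mul_one_div, add_comm, div_self (ne_of_gt h1ν)],
        show (2:ℝ) * (1 / (1 + ν)) = 2 / (1 + ν) by ring,
        Real.rpow_one]
      ring
    rw [hMsplit]
    ring
  have hsymm : iteratedFDeriv ℝ 3 f x ![h, h, u] = iteratedFDeriv ℝ 3 f x ![u, h, h] := by
    rw [swap23 f hf x h h u, swap12 f hf x h u h]
  rw [hsymm, abs_le]
  constructor
  · have hk := key u hu
    linarith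
  · have hneg : iteratedFDeriv ℝ 3 f x ![-u, h, h]
        = -(iteratedFDeriv ℝ 3 f x ![u, h, h]) := by
      rw [third_eq f hf, third_eq f hf]
      exact (fderiv ℝ _ x).map_neg u
    have hk := key (-u) (neg_ne_zero.mpr hu)
    rw [hneg, neg_neg, norm_neg] at hk
    linarith
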